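/- Let k, t1, t2, …, tv be integers with k ≥ t1 > t2 > … > tv ≥ 1, and let S = {π1, …, πn} be a (k; k−t1, k−t2, …, k−tv)-SPID in a finite-dimensional vector space V over a field, with n ≥ 3. Then there exists a permutation σ of {1, …, n} such that, setting δ_j(S_σ) = dim⟨π_{σ(1)}, …, π_{σ(j)}⟩ − dim⟨π_{σ(1)}, …, π_{σ(j−1)}⟩ for 2 ≤ j ≤ n, one has t1 = δ_2(S_σ) ≥ δ_3(S_σ) ≥ … ≥ δ_n(S_σ). -/

import Mathlib

open Module

variable {F : Type*} [Field F] {V : Type*} [AddCommGroup V] [Module F V]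
  [FiniteDimensional F V]

/-- The subspace `⟨π_1, …, π_j⟩` (1-based), i.e. the span of the `π i` with `(i : ℕ) < j`. -/
def pspan {n : ℕ} (π : Fin n → Submodule F V) (j : ℕ) : Submodule F V :=
  ⨆ i : Fin n, ⨆ _ : (i : ℕ) < j, π i

/-- The 1-based difference sequence `δ_j = dim⟨π_1,…,π_j⟩ - dim⟨π_1,…,π_{j-1}⟩`. -/
noncomputable def delta {n : ℕ} (π : Fin n → Submodule F V) (j : ℕ) : ℕ :=
  finrank F ↥(pspan π j) - finrank F ↥(pspan π (j - 1))

/-- A `(k; ℓ_1, …, ℓ_v)`-SPID, where `L` is the set of prescribed intersection dimensions: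
a family of pairwise distinct `k`-dimensional subspaces, any two distinct members meeting
in a dimension belonging to `L`, and every value of `L` being attained. -/
def IsSPID {n : ℕ} (k : ℕ) (L : Set ℕ) (π : Fin n → Submodule F V) : Prop :=
  Function.Injective π ∧
  (∀ i, finrank F ↥(π i) = k) ∧
  (∀ i j, i ≠ j → finrank F ↥(π i ⊓ π j) ∈ L) ∧
  ∀ ℓ ∈ L, ∃ i j, i ≠ j ∧ finrank F ↥(π i ⊓ π j) = ℓ

/-- An `ℓ`-junta: all members pass through a common `ℓ`-dimensional subspace. -/
def IsJunta {n : ℕ} (ℓ : ℕ) (π : Fin n → Submodule F V) : Prop :=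
  ∃ C : Submodule F V, finrank F ↥C = ℓ ∧ ∀ i, C ≤ π i

/-- `S` contains an `ℓ`-sunflower of maximal dimension with `p` petals (all petals being
`k`-dimensional): `p` members of `S` pairwise meeting exactly in a common `ℓ`-dimensional
center and spanning a subspace of dimension `ℓ + p(k - ℓ)`. -/
def HasMaxSunflower (k ℓ p : ℕ) (S : Set (Submodule F V)) : Prop :=
  ∃ A : Finset (Submodule F V), ↑A ⊆ S ∧ A.card = p ∧
    ∃ C : Submodule F V, finrank F ↥C = ℓ ∧
      (∀ W ∈ A, ∀ W' ∈ A, W ≠ W' → W ⊓ W' = C) ∧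
      finrank F ↥(A.sup id) = ℓ + p * (k - ℓ)

/-! ### Auxiliary material for the proof of `statement0`. -/

/-- Span of the subspaces indexed by a list. -/
def spanL {n : ℕ} (π : Fin n → Submodule F V) : List (Fin n) → Submodule F V
  | [] => ⊥
  | (i :: L) => π i ⊔ spanL π L

lemma spanL_append {n : ℕ} (π : Fin n → Submodule F V) (A B : List (Fin n)) :
    spanL π (A ++ B) = spanL π A ⊔ spanL π B := by
  induction A with
  | nil => simp [spanL]
  | cons i A ih => simp [spanL, ih, sup_assoc]

lemma le_spanL {n : ℕ} (π : Fin n → Submodule F V) {x : Fin n} {L : List (Fin n)}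
    (hx : x ∈ L) : π x ≤ spanL π L := by
  induction L with
  | nil => simp at hx
  | cons i L ih =>
    rcases List.mem_cons.mp hx with h | h
    · subst h; exact le_sup_left
    · exact (ih h).trans le_sup_right

lemma spanL_le {n : ℕ} (π : Fin n → Submodule F V) {L : List (Fin n)} {W : Submodule F V}
    (h : ∀ x ∈ L, π x ≤ W) : spanL π L ≤ W := by
  induction L with
  | nil => simp [spanL]
  | cons i L ih =>
    exact sup_le (h i (by simp)) (ih fun x hx => h x (by simp [hx]))

lemma spanL_mono {n : ℕ} (π : Fin n → Submodule F V) {L L' : List (Fin n)}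
    (h : ∀ x ∈ L, x ∈ L') : spanL π L ≤ spanL π L' :=
  spanL_le π fun x hx => le_spanL π (h x hx)

lemma pspan_eq_spanL {n : ℕ} (π : Fin n → Submodule F V) (M : List (Fin n))
    (hM : M.length = n) (f : Fin n → Fin n)
    (hf : ∀ i : Fin n, f i = M[(i : ℕ)]'(by rw [hM]; exact i.isLt)) (j : ℕ) :
    pspan (π ∘ f) j = spanL π (M.take j) := by
  apply le_antisymm
  · apply iSup_le; intro i; apply iSup_le; intro hij
    simp only [Function.comp_apply, hf]
    apply le_spanL
    have h1 : (i : ℕ) < (M.take j).length := by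
      simp only [List.length_take, hM]; exact lt_min hij i.isLt
    have h2 : M[(i : ℕ)]'(by rw [hM]; exact i.isLt) = (M.take j)[(i : ℕ)]'h1 :=
      List.getElem_take.symm
    rw [h2]; exact List.getElem_mem h1
  · apply spanL_le; intro x hx
    obtain ⟨i, hi, hx⟩ := List.mem_iff_getElem.mp hx
    have hi' : i < j := by simp only [List.length_take] at hi; omega
    have hin : i < n := by simp only [List.length_take, hM] at hi; omega
    have hx' : π x = (π ∘ f) ⟨i, hin⟩ := by
      rw [← hx, List.getElem_take]
      simp only [Function.comp_apply, hf]
    rw [hx']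
    exact le_iSup_of_le ⟨i, hin⟩ (le_iSup (fun _ => (π ∘ f) ⟨i, hin⟩) hi')

/-- Pick an unused index maximizing the dimension of the span after adding it. -/
noncomputable def nextPick {n : ℕ} (π : Fin n → Submodule F V) (L : List (Fin n))
    (d : Fin n) : Fin n :=
  if h : (Finset.univ \ L.toFinset).Nonempty then
    (Finset.exists_max_image (Finset.univ \ L.toFinset)
      (fun c => finrank F ↥(spanL π L ⊔ π c)) h).choose
  else d

lemma nextPick_spec {n : ℕ} (π : Fin n → Submodule F V) (L : List (Fin n)) (d : Fin n)
    (h : L.toFinset ≠ Finset.univ) :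
    nextPick π L d ∉ L ∧
      ∀ c : Fin n, c ∉ L →
        finrank F ↥(spanL π L ⊔ π c) ≤ finrank F ↥(spanL π L ⊔ π (nextPick π L d)) := by
  have hne : (Finset.univ \ L.toFinset).Nonempty := by
    rw [Finset.sdiff_nonempty]
    intro hsub
    exact h (le_antisymm (Finset.subset_univ _) hsub)
  rw [nextPick, dif_pos hne]
  obtain ⟨hmem, hmax⟩ := (Finset.exists_max_image (Finset.univ \ L.toFinset)
      (fun c => finrank F ↥(spanL π L ⊔ π c)) hne).choose_spec
  refine ⟨?_, ?_⟩
  · intro hc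
    exact (Finset.mem_sdiff.mp hmem).2 (List.mem_toFinset.mpr hc)
  · intro c hc
    exact hmax c (Finset.mem_sdiff.mpr ⟨Finset.mem_univ _, fun hc' => hc (List.mem_toFinset.mp hc')⟩)

/-- Greedy ordering: start with `a, b`, then repeatedly add an unused index maximizing
the dimension of the span. -/
noncomputable def greedy {n : ℕ} (π : Fin n → Submodule F V) (a b : Fin n) : ℕ → List (Fin n)
  | 0 => [a, b]
  | (m+1) => greedy π a b m ++ [nextPick π (greedy π a b m) a]

lemma greedy_length {n : ℕ} (π : Fin n → Submodule F V) (a b : Fin n) (m : ℕ) :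
    (greedy π a b m).length = m + 2 := by
  induction m with
  | zero => simp [greedy]
  | succ m ih => simp [greedy, ih]

lemma greedy_prefix {n : ℕ} (π : Fin n → Submodule F V) (a b : Fin n) {m m' : ℕ}
    (h : m ≤ m') : greedy π a b m <+: greedy π a b m' := by
  induction m' with
  | zero => simp_all
  | succ m' ih =>
    rcases Nat.lt_or_ge m (m' + 1) with h' | h'
    · exact (ih (by omega)).trans ⟨_, rfl⟩
    · have : m = m' + 1 := by omega
      subst this; exact List.prefix_refl _

lemma greedy_toFinset_ne {n : ℕ} (π : Fin n → Submodule F V) (a b : Fin n) {m : ℕ}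
    (h : m + 2 < n) : (greedy π a b m).toFinset ≠ Finset.univ := by
  intro hEq
  have h1 : (greedy π a b m).toFinset.card ≤ m + 2 := by
    rw [← greedy_length π a b m]; exact List.toFinset_card_le _
  rw [hEq, Finset.card_univ, Fintype.card_fin] at h1
  omega

lemma greedy_nodup {n : ℕ} (π : Fin n → Submodule F V) {a b : Fin n} (hab : a ≠ b) {m : ℕ}
    (h : m + 2 ≤ n) : (greedy π a b m).Nodup := by
  induction m with
  | zero => simp [greedy, hab]
  | succ m ih =>
    have h1 := (nextPick_spec π (greedy π a b m) a (greedy_toFinset_ne π a b (by omega))).1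
    have h2 := ih (by omega)
    rw [greedy, List.nodup_append]
    refine ⟨h2, List.nodup_singleton _, ?_⟩
    intro x hx y hx'
    rw [List.mem_singleton] at hx'
    subst hx'
    rintro rfl; exact h1 hx

/-- Submodularity of `finrank` on submodules. -/
lemma finrank_submodular {U W X : Submodule F V} (hUW : U ≤ W) :
    finrank F ↥(W ⊔ X) + finrank F ↥U ≤ finrank F ↥(U ⊔ X) + finrank F ↥W := by
  have h1 : W ⊔ (U ⊔ X) = W ⊔ X := by rw [← sup_assoc, sup_eq_left.mpr hUW]
  have h2 := Submodule.finrank_sup_add_finrank_inf_eq W (U ⊔ X)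
  have h3 : finrank F ↥U ≤ finrank F ↥(W ⊓ (U ⊔ X)) :=
    Submodule.finrank_mono (le_inf hUW le_sup_left)
  rw [h1] at h2
  omega

/-- The dimension of the span of the first `j` entries of `M`. -/
noncomputable def dimSeq {n : ℕ} (π : Fin n → Submodule F V) (M : List (Fin n)) (j : ℕ) : ℕ :=
  finrank F ↥(spanL π (M.take j))

/-- Proposition 1.2 (sorting): a SPID can always be reordered so that the associated
array `(δ_2, …, δ_n)` is non-increasing, starting with `δ_2 = t_1`. -/
theorem statement0 {n v k : ℕ} (hn : 3 ≤ n) (hv : 0 < v)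
    (t : Fin v → ℕ) (ht1 : t ⟨0, hv⟩ ≤ k) (hanti : StrictAnti t) (htv : ∀ i, 1 ≤ t i)
    (π : Fin n → Submodule F V)
    (hS : IsSPID k {ℓ | ∃ i, ℓ = k - t i} π) :
    ∃ σ : Equiv.Perm (Fin n),
      delta (π ∘ σ) 2 = t ⟨0, hv⟩ ∧
      ∀ j, 2 ≤ j → j < n → delta (π ∘ σ) (j + 1) ≤ delta (π ∘ σ) j := by
  obtain ⟨hinj, hdim, hint, hatt⟩ := hS
  obtain ⟨a, b, hab, hdimab⟩ := hatt (k - t ⟨0, hv⟩) ⟨⟨0, hv⟩, rfl⟩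
  -- The span of two distinct members is at most `k + t1`-dimensional.
  have hsup_le : ∀ i j : Fin n, i ≠ j → finrank F ↥(π i ⊔ π j) ≤ k + t ⟨0, hv⟩ := by
    intro i j hij
    obtain ⟨m, hm⟩ := hint i j hij
    have h1 := Submodule.finrank_sup_add_finrank_inf_eq (π i) (π j)
    have h2 : t m ≤ t ⟨0, hv⟩ := hanti.antitone (by simp [Fin.le_def])
    rw [hdim i, hdim j, hm] at h1
    omega
  have hsupab : finrank F ↥(π a ⊔ π b) = k + t ⟨0, hv⟩ := by
    have h1 := Submodule.finrank_sup_add_finrank_inf_eq (π a) (π b)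
    rw [hdim a, hdim b, hdimab] at h1
    omega
  -- The greedy ordering.
  set M := greedy π a b (n - 2) with hMdef
  have hMlen : M.length = n := by rw [hMdef, greedy_length]; omega
  have hMnodup : M.Nodup := greedy_nodup π hab (by omega)
  have hMget : ∀ m : ℕ, m + 2 ≤ n → M.take (m + 2) = greedy π a b m := by
    intro m hm
    have hpre := greedy_prefix π a b (show m ≤ n - 2 by omega)
    rw [List.prefix_iff_eq_take, greedy_length] at hpre
    exact hpre.symm
  have htake2 : M.take 2 = [a, b] := hMget 0 (by omega)
  have htake1 : M.take 1 = [a] := by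
    have h := congrArg (List.take 1) htake2
    rw [List.take_take] at h
    simpa using h
  have hD1 : dimSeq π M 1 = k := by
    rw [dimSeq, htake1, show spanL π [a] = π a ⊔ ⊥ from rfl, sup_bot_eq]
    exact hdim a
  have hD2 : dimSeq π M 2 = k + t ⟨0, hv⟩ := by
    rw [dimSeq, htake2, show spanL π [a, b] = π a ⊔ (π b ⊔ ⊥) from rfl, sup_bot_eq]
    exact hsupab
  have hmono : ∀ j j' : ℕ, j ≤ j' → dimSeq π M j ≤ dimSeq π M j' := by
    intro j j' h
    rw [dimSeq, dimSeq]
    apply Submodule.finrank_mono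
    apply spanL_mono
    intro x hx
    have h' : M.take j = (M.take j').take j := by rw [List.take_take, min_eq_left h]
    rw [h'] at hx
    exact List.take_subset _ _ hx
  -- Key inequality: concavity of the dimension sequence along the greedy order.
  have hkey : ∀ j : ℕ, 2 ≤ j → j < n →
      dimSeq π M (j + 1) + dimSeq π M (j - 1) ≤ dimSeq π M j + dimSeq π M j := by
    intro j h2 hjn
    obtain ⟨m, rfl⟩ : ∃ m, j = m + 2 := ⟨j - 2, by omega⟩
    obtain ⟨hxL, hxmax⟩ := nextPick_spec π (greedy π a b m) a (greedy_toFinset_ne π a b hjn)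
    have htakej : M.take (m + 2) = greedy π a b m := hMget m (by omega)
    have htakej1 : M.take (m + 3) =
        greedy π a b m ++ [nextPick π (greedy π a b m) a] := hMget (m + 1) (by omega)
    have hDj : dimSeq π M (m + 2) = finrank F ↥(spanL π (greedy π a b m)) := by
      rw [dimSeq, htakej]
    have hDj1 : dimSeq π M (m + 3) =
        finrank F ↥(spanL π (greedy π a b m) ⊔ π (nextPick π (greedy π a b m) a)) := by
      rw [dimSeq, htakej1, spanL_append, show spanL π [nextPick π (greedy π a b m) a] =
        π (nextPick π (greedy π a b m) a) ⊔ ⊥ from rfl, sup_bot_eq]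
    rw [show m + 2 + 1 = m + 3 from rfl, show m + 2 - 1 = m + 1 from rfl, hDj1, hDj]
    cases m with
    | zero =>
      have hxa : nextPick π (greedy π a b 0) a ≠ a := by
        intro h
        exact hxL (by rw [h]; show a ∈ [a, b]; simp)
      have haL : π a ≤ spanL π (greedy π a b 0) :=
        le_spanL π (show a ∈ [a, b] by simp)
      have hsub := finrank_submodular (X := π (nextPick π (greedy π a b 0) a)) haL
      have hax := hsup_le a _ (fun h => hxa h.symm)
      have hfa := hdim a
      have hsL : finrank F ↥(spanL π (greedy π a b 0)) = k + t ⟨0, hv⟩ := by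
        rw [show spanL π (greedy π a b 0) = π a ⊔ (π b ⊔ ⊥) from rfl, sup_bot_eq]
        exact hsupab
      rw [show (0 : ℕ) + 1 = 1 from rfl, hD1, hsL]
      rw [hsL] at hsub
      omega
    | succ m' =>
      have htakej' : M.take (m' + 2) = greedy π a b m' := hMget m' (by omega)
      obtain ⟨hyL', hymax⟩ :=
        nextPick_spec π (greedy π a b m') a (greedy_toFinset_ne π a b (by omega))
      have hxL'' : nextPick π (greedy π a b (m' + 1)) a ∉ greedy π a b m' := by
        intro h
        exact hxL (show _ ∈ greedy π a b m' ++ [nextPick π (greedy π a b m') a] from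
          List.mem_append_left _ h)
      have hW : spanL π (greedy π a b (m' + 1)) =
          spanL π (greedy π a b m') ⊔ π (nextPick π (greedy π a b m') a) := by
        rw [show greedy π a b (m' + 1) =
          greedy π a b m' ++ [nextPick π (greedy π a b m') a] from rfl, spanL_append,
          show spanL π [nextPick π (greedy π a b m') a] =
          π (nextPick π (greedy π a b m') a) ⊔ ⊥ from rfl, sup_bot_eq]
      have hUW : spanL π (greedy π a b m') ≤ spanL π (greedy π a b (m' + 1)) := by
        rw [hW]; exact le_sup_left
      have hsub := finrank_submodular (X := π (nextPick π (greedy π a b (m' + 1)) a)) hUW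
      have hgreedy := hymax _ hxL''
      have hDm1 : dimSeq π M (m' + 1 + 1) = finrank F ↥(spanL π (greedy π a b m')) := by
        rw [show m' + 1 + 1 = m' + 2 from rfl, dimSeq, htakej']
      have hWr : finrank F ↥(spanL π (greedy π a b (m' + 1))) =
          finrank F ↥(spanL π (greedy π a b m') ⊔ π (nextPick π (greedy π a b m') a)) := by
        rw [hW]
      rw [hDm1]
      omega
  -- Build the permutation from the greedy list.
  have hgetinj : Function.Injective
      (fun i : Fin n => M[(i : ℕ)]'(by rw [hMlen]; exact i.isLt)) := by
    intro i i' hE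
    have h := List.nodup_iff_injective_getElem.mp hMnodup
    have h1 := h (a₁ := ⟨(i : ℕ), by rw [hMlen]; exact i.isLt⟩)
      (a₂ := ⟨(i' : ℕ), by rw [hMlen]; exact i'.isLt⟩) hE
    have h2 : (i : ℕ) = (i' : ℕ) := Fin.mk.inj h1
    exact Fin.ext h2
  let σ : Equiv.Perm (Fin n) :=
    Equiv.ofBijective _ (Finite.injective_iff_bijective.mp hgetinj)
  have hpspan : ∀ j : ℕ, pspan (π ∘ ⇑σ) j = spanL π (M.take j) :=
    pspan_eq_spanL π M hMlen ⇑σ (fun i => rfl)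
  have hdelta : ∀ j : ℕ, delta (π ∘ ⇑σ) j = dimSeq π M j - dimSeq π M (j - 1) := by
    intro j
    rw [delta, hpspan, hpspan, dimSeq, dimSeq]
  refine ⟨σ, ?_, ?_⟩
  · rw [hdelta, show (2 : ℕ) - 1 = 1 from rfl, hD1, hD2]
    omega
  · intro j h2 hjn
    rw [hdelta, hdelta, show j + 1 - 1 = j from rfl]
    have h3 := hkey j h2 hjn
    have h4 := hmono (j - 1) j (by omega)
    omega
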